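/- Under the hypotheses of the Sewing Lemma, let 0 ≤ ε < α and suppose there are a real Banach space (E, ‖·‖_E), a continuous linear injection ι : E → W with ‖ι(e)‖ ≤ ‖e‖_E for all e ∈ E, a constant C₀ ≥ 0, and for each t ∈ (0,T] a linear map S_E(t) : W → E with ι(S_E(t)x) = S(t)x and ‖S_E(t)x‖_E ≤ C₀ t^{−ε} ‖x‖ for all x ∈ W. Then for all 0 ≤ s < t ≤ T the element (δ̂IΞ)_{ts} lies in the image of ι, say (δ̂IΞ)_{ts} = ι(e_{ts}), and there is a constant C depending only on c_S, C₀, α, β, ρ, ε and T such that ‖e_{ts}‖_E ≤ C (c₁ + c₂)(t−s)^{α−ε}. -/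

import Mathlib

set_option maxHeartbeats 1000000 in
/-- The sewing increments take values in the fractional domain `D_ε`,
with the corresponding estimate. -/
theorem sewing_map_fractional_domain_estimate
    {W E : Type*} [NormedAddCommGroup W] [NormedSpace ℝ W] [CompleteSpace W]
    [NormedAddCommGroup E] [NormedSpace ℝ E] [CompleteSpace E]
    (T : ℝ) (hT : 0 < T)
    (S : ℝ → W →L[ℝ] W)
    (hS0 : S 0 = ContinuousLinearMap.id ℝ W)
    (hSadd : ∀ t s : ℝ, 0 ≤ t → 0 ≤ s → S (t + s) = (S t).comp (S s))
    (cS : ℝ) (hScS : ∀ t : ℝ, 0 ≤ t → t ≤ T → ‖S t‖ ≤ cS)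
    (Ξ : ℝ → ℝ → W)
    (hΞcont : ContinuousOn (fun p : ℝ × ℝ => Ξ p.1 p.2)
      {p : ℝ × ℝ | 0 ≤ p.2 ∧ p.2 ≤ p.1 ∧ p.1 ≤ T})
    (c₁ c₂ α β ρ : ℝ) (hc₁ : 0 ≤ c₁) (hc₂ : 0 ≤ c₂)
    (hα0 : 0 ≤ α) (hα1 : α ≤ 1) (hβ0 : 0 ≤ β) (hβ1 : β ≤ 1) (hρ : 1 < ρ)
    (hαβρ : α + β ≤ ρ)
    (hΞ1 : ∀ u v : ℝ, 0 ≤ u → u ≤ v → v ≤ T → ‖Ξ v u‖ ≤ c₁ * (v - u) ^ α)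
    (hΞ2 : ∀ u m v : ℝ, 0 < u → u ≤ m → m ≤ v → v ≤ T →
      ‖Ξ v u - Ξ v m - S (v - m) (Ξ m u)‖ ≤ c₂ * u ^ (-β) * (v - u) ^ ρ)
    -- `I` is the sewing map of `Ξ` provided by the Sewing Lemma:
    (I : ℝ → W) (hIcont : ContinuousOn I (Set.Icc 0 T)) (hI0 : I 0 = 0)
    (CI : ℝ)
    (hIbd1 : ∀ s t : ℝ, 0 ≤ s → s ≤ t → t ≤ T →
      ‖I t - S (t - s) (I s)‖ ≤ CI * (c₁ + c₂) * (t - s) ^ α)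
    (hIbd2 : ∀ s t : ℝ, 0 < s → s ≤ t → t ≤ T →
      ‖I t - S (t - s) (I s) - Ξ t s‖ ≤ CI * c₂ * s ^ (-β) * (t - s) ^ ρ)
    -- the fractional domain `D_ε` structure:
    (ε : ℝ) (hε0 : 0 ≤ ε) (hεα : ε < α)
    (ι : E →L[ℝ] W) (hιinj : Function.Injective ι) (hιnorm : ∀ e : E, ‖ι e‖ ≤ ‖e‖)
    (C₀ : ℝ) (hC₀ : 0 ≤ C₀)
    (SE : ℝ → W →ₗ[ℝ] E)
    (hSE : ∀ t : ℝ, 0 < t → t ≤ T → ∀ x : W, ι (SE t x) = S t x)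
    (hSEbd : ∀ t : ℝ, 0 < t → t ≤ T → ∀ x : W, ‖SE t x‖ ≤ C₀ * t ^ (-ε) * ‖x‖) :
    ∃ C : ℝ, 0 ≤ C ∧ ∀ s t : ℝ, 0 ≤ s → s < t → t ≤ T →
      ∃ e : E, ι e = I t - S (t - s) (I s) ∧
        ‖e‖ ≤ C * (c₁ + c₂) * (t - s) ^ (α - ε) := by
  classical
  set K := max CI 0 with hK
  have hK0 : 0 ≤ K := le_max_right _ _
  have hKbd : ∀ u v : ℝ, 0 ≤ u → u ≤ v → v ≤ T →
      ‖I v - S (v - u) (I u)‖ ≤ K * (c₁ + c₂) * (v - u) ^ α := by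
    intro u v hu huv hv
    refine (hIbd1 u v hu huv hv).trans ?_
    have h1 : (0:ℝ) ≤ (c₁ + c₂) * (v - u) ^ α :=
      mul_nonneg (by linarith) (Real.rpow_nonneg (by linarith) _)
    have h2 : CI ≤ K := le_max_left _ _
    nlinarith
  have hαε : 0 < α - ε := by linarith
  set r : ℝ := (1/2 : ℝ) ^ (α - ε) with hr
  have hr0 : 0 ≤ r := Real.rpow_nonneg (by norm_num) _
  have hr1 : r < 1 := Real.rpow_lt_one (by norm_num) (by norm_num) hαε
  have hpow : ∀ (p : ℝ) (n : ℕ), ((1/2:ℝ)^n) ^ p = ((1/2:ℝ) ^ p) ^ n := by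
    intro p n
    rw [← Real.rpow_natCast (1/2:ℝ) n, ← Real.rpow_mul (by norm_num),
      mul_comm (n:ℝ) p, Real.rpow_mul (by norm_num), Real.rpow_natCast]
  refine ⟨C₀ * K * (1 - r)⁻¹, ?_, ?_⟩
  · have : (0:ℝ) ≤ (1 - r)⁻¹ := inv_nonneg.2 (by linarith)
    exact mul_nonneg (mul_nonneg hC₀ hK0) this
  intro s t hs hst htT
  set d : ℝ := t - s with hd
  have hd0 : 0 < d := by simp only [hd]; linarith
  have hdT : d ≤ T := by simp only [hd]; linarith
  set g : ℕ → ℝ := fun n => d * (1/2 : ℝ) ^ n with hg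
  have hgpos : ∀ n, 0 < g n := fun n => mul_pos hd0 (pow_pos (by norm_num) n)
  have hgle : ∀ n, g n ≤ d := by
    intro n
    have h1 : (1/2:ℝ)^n ≤ 1 := pow_le_one₀ (by norm_num) (by norm_num)
    have := hd0.le
    calc g n = d * (1/2:ℝ)^n := rfl
      _ ≤ d * 1 := by nlinarith
      _ = d := mul_one d
  have hgT : ∀ n, g n ≤ T := fun n => (hgle n).trans hdT
  set q : ℕ → ℝ := fun n => t - g n with hq
  have hq0 : q 0 = s := by simp [hq, hg, hd]
  have hgsucc : ∀ n, g n = g (n+1) + g (n+1) := by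
    intro n
    show d * (1/2:ℝ)^n = d * (1/2:ℝ)^(n+1) + d * (1/2:ℝ)^(n+1)
    rw [pow_succ]; ring
  have hqmono : ∀ n, q n ≤ q (n+1) := by
    intro n
    have := hgpos (n+1)
    have h2 := hgsucc n
    show t - g n ≤ t - g (n+1)
    linarith
  have hqs : ∀ n, s ≤ q n := by
    intro n
    induction n with
    | zero => rw [hq0]
    | succ k ih => exact ih.trans (hqmono k)
  have hq0le : ∀ n, 0 ≤ q n := fun n => hs.trans (hqs n)
  have hqt : ∀ n, q n ≤ t := by
    intro n; have := (hgpos n).le; show t - g n ≤ t; linarith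
  have hqT : ∀ n, q n ≤ T := fun n => (hqt n).trans htT
  -- cocycle identity
  have hco : ∀ u m v : ℝ, 0 ≤ u → u ≤ m → m ≤ v →
      I v - S (v - u) (I u) =
      (I v - S (v - m) (I m)) + S (v - m) (I m - S (m - u) (I u)) := by
    intro u m v hu hum hmv
    have h1 : S (v - u) = (S (v - m)).comp (S (m - u)) := by
      have h := hSadd (v - m) (m - u) (by linarith) (by linarith)
      rw [show v - m + (m - u) = v - u by ring] at h
      exact h
    rw [h1, map_sub]
    simp only [ContinuousLinearMap.comp_apply]
    abel
  set a : ℕ → E := fun n => SE (g (n+1)) (I (q (n+1)) - S (g (n+1)) (I (q n))) with ha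
  have hιa : ∀ n, ι (a n) = S (g (n+1)) (I (q (n+1)) - S (g (n+1)) (I (q n))) := by
    intro n; exact hSE (g (n+1)) (hgpos (n+1)) (hgT (n+1)) _
  have hqdiff : ∀ n, q (n+1) - q n = g (n+1) := by
    intro n
    have := hgsucc n
    show (t - g (n+1)) - (t - g n) = g (n+1)
    linarith
  set M : ℝ := C₀ * (K * (c₁ + c₂)) * d ^ (α - ε) with hM
  have hM0 : 0 ≤ M :=
    mul_nonneg (mul_nonneg hC₀ (mul_nonneg hK0 (by linarith)))
      (Real.rpow_nonneg hd0.le _)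
  have habd : ∀ n, ‖a n‖ ≤ M * r ^ n := by
    intro n
    have h1 : ‖a n‖ ≤ C₀ * (g (n+1)) ^ (-ε) * ‖I (q (n+1)) - S (g (n+1)) (I (q n))‖ :=
      hSEbd (g (n+1)) (hgpos (n+1)) (hgT (n+1)) _
    have h2 : ‖I (q (n+1)) - S (q (n+1) - q n) (I (q n))‖ ≤
        K * (c₁ + c₂) * (q (n+1) - q n) ^ α :=
      hKbd (q n) (q (n+1)) (hq0le n) (hqmono n) (hqT (n+1))
    rw [hqdiff n] at h2
    have h3 : ‖a n‖ ≤ C₀ * (g (n+1)) ^ (-ε) * (K * (c₁ + c₂) * (g (n+1)) ^ α) := by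
      refine h1.trans ?_
      have hnn : (0:ℝ) ≤ C₀ * (g (n+1)) ^ (-ε) :=
        mul_nonneg hC₀ (Real.rpow_nonneg (hgpos (n+1)).le _)
      exact mul_le_mul_of_nonneg_left h2 hnn
    have h4 : (g (n+1)) ^ (-ε) * (g (n+1)) ^ α = (g (n+1)) ^ (α - ε) := by
      rw [← Real.rpow_add (hgpos (n+1))]
      ring_nf
    have h5 : (g (n+1)) ^ (α - ε) = d ^ (α - ε) * r ^ (n+1) := by
      show (d * (1/2:ℝ)^(n+1)) ^ (α - ε) = _
      rw [Real.mul_rpow hd0.le (by positivity), hpow]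
    have h6 : ‖a n‖ ≤ M * r ^ (n+1) := by
      calc ‖a n‖ ≤ C₀ * (g (n+1)) ^ (-ε) * (K * (c₁ + c₂) * (g (n+1)) ^ α) := h3
        _ = C₀ * (K * (c₁ + c₂)) * ((g (n+1)) ^ (-ε) * (g (n+1)) ^ α) := by ring
        _ = C₀ * (K * (c₁ + c₂)) * (g (n+1)) ^ (α - ε) := by rw [h4]
        _ = M * r ^ (n+1) := by rw [h5, hM]; ring
    have hrs : r ^ (n+1) ≤ r ^ n := by
      calc r ^ (n+1) = r ^ n * r := pow_succ r n
        _ ≤ r ^ n * 1 := mul_le_mul_of_nonneg_left hr1.le (pow_nonneg hr0 n)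
        _ = r ^ n := mul_one _
    exact h6.trans (mul_le_mul_of_nonneg_left hrs hM0)
  have hMsum : Summable (fun n : ℕ => M * r ^ n) :=
    (summable_geometric_of_lt_one hr0 hr1).mul_left M
  have hasum : Summable a := Summable.of_norm_bounded hMsum habd
  set e : E := ∑' n, a n with he
  have hae : HasSum a e := hasum.hasSum
  refine ⟨e, ?_, ?_⟩
  · -- ι e equals the increment
    have hιsum : HasSum (fun n => ι (a n)) (ι e) := ι.hasSum hae
    have htend1 : Filter.Tendsto (fun N => ∑ n ∈ Finset.range N, ι (a n))
        Filter.atTop (nhds (ι e)) := hιsum.tendsto_sum_nat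
    have htel : ∀ N, ∑ n ∈ Finset.range N, ι (a n) =
        (I t - S d (I s)) - (I t - S (g N) (I (q N))) := by
      intro N
      induction N with
      | zero =>
        have hg0 : g 0 = d := by show d * (1/2:ℝ)^0 = d; simp
        simp [hg0, hq0]
      | succ k ih =>
        rw [Finset.sum_range_succ, ih, hιa k]
        have hstep := hco (q k) (q (k+1)) t (hq0le k) (hqmono k) (hqt (k+1))
        have e1 : t - q k = g k := by show t - (t - g k) = g k; ring
        have e2 : t - q (k+1) = g (k+1) := by show t - (t - g (k+1)) = g (k+1); ring
        rw [e1, e2, hqdiff k] at hstep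
        rw [hstep]
        abel
    -- remainder tends to zero
    have hrem : Filter.Tendsto (fun N => I t - S (g N) (I (q N)))
        Filter.atTop (nhds 0) := by
      rw [tendsto_zero_iff_norm_tendsto_zero]
      have hb : ∀ N, ‖I t - S (g N) (I (q N))‖ ≤ (K * (c₁ + c₂) * d ^ α) * ((1/2:ℝ) ^ α) ^ N := by
        intro N
        have h2 : ‖I t - S (t - q N) (I (q N))‖ ≤ K * (c₁ + c₂) * (t - q N) ^ α :=
          hKbd (q N) t (hq0le N) (hqt N) htT
        have e1 : t - q N = g N := by show t - (t - g N) = g N; ring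
        rw [e1] at h2
        refine h2.trans ?_
        have h5 : (g N) ^ α = d ^ α * ((1/2:ℝ) ^ α) ^ N := by
          show (d * (1/2:ℝ)^N) ^ α = _
          rw [Real.mul_rpow hd0.le (by positivity), hpow]
        rw [h5]; ring_nf; rfl
      have hgeo : Filter.Tendsto (fun N : ℕ => (K * (c₁ + c₂) * d ^ α) * ((1/2:ℝ) ^ α) ^ N)
          Filter.atTop (nhds 0) := by
        rw [show (0:ℝ) = (K * (c₁ + c₂) * d ^ α) * 0 by ring]
        exact (tendsto_pow_atTop_nhds_zero_of_lt_one
          (Real.rpow_nonneg (by norm_num) _)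
          (Real.rpow_lt_one (by norm_num) (by norm_num) (by linarith))).const_mul _
      exact squeeze_zero (fun N => norm_nonneg _) hb hgeo
    have htend2 : Filter.Tendsto (fun N => ∑ n ∈ Finset.range N, ι (a n))
        Filter.atTop (nhds (I t - S d (I s))) := by
      simp only [htel]
      have := Filter.Tendsto.sub (tendsto_const_nhds
        (x := I t - S d (I s)) (f := Filter.atTop (α := ℕ))) hrem
      simpa using this
    have := tendsto_nhds_unique htend1 htend2
    rw [this]
  · -- norm estimate
    have hMgeo : HasSum (fun n : ℕ => M * r ^ n) (M * (1 - r)⁻¹) :=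
      (hasSum_geometric_of_lt_one hr0 hr1).mul_left M
    have hnorm : ‖e‖ ≤ M * (1 - r)⁻¹ := tsum_of_norm_bounded hMgeo habd
    refine hnorm.trans_eq ?_
    rw [hM]; ring
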